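/- The HEOL estimator is exact for constant F: if (d/dt)δθ(s) = F + α(s)·δu(s) on [t−T, t] with F constant, then −(6/T³)·∫_0^T [(T − 2σ)·δθ(σ + t − T) + σ(T − σ)·α(σ + t − T)·δu(σ + t − T)] dσ = F. -/

import Mathlib

open Real intervalIntegral

theorem heol_estimator_exact_for_constant_F
    (T t F : ℝ) (hT : 0 < T)
    (δθ w : ℝ → ℝ) (hw : Continuous w)
    (hδθ : ∀ s ∈ Set.Icc (t - T) t, HasDerivAt δθ (F + w s) s) :
    -(6 / T ^ 3) * ∫ σ in (0:ℝ)..T,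
        ((T - 2 * σ) * δθ (σ + t - T) + σ * (T - σ) * w (σ + t - T)) = F := by
  have huIcc : Set.uIcc (0:ℝ) T = Set.Icc 0 T := Set.uIcc_of_le hT.le
  have hmem : ∀ σ ∈ Set.Icc (0:ℝ) T, σ + t - T ∈ Set.Icc (t - T) t := by
    intro σ hσ
    exact ⟨by linarith [hσ.1], by linarith [hσ.2]⟩
  have hcδθ : ContinuousOn (fun σ : ℝ => δθ (σ + t - T)) (Set.Icc 0 T) := by
    intro σ hσ
    have h2 : HasDerivAt (fun σ : ℝ => σ + t - T) 1 σ := by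
      simpa using ((hasDerivAt_id σ).add_const t).sub_const T
    exact (((hδθ _ (hmem σ hσ)).comp σ h2).continuousAt).continuousWithinAt
  have hint_key : IntervalIntegrable
      (fun σ : ℝ => (T - 2 * σ) * δθ (σ + t - T) + σ * (T - σ) * (F + w (σ + t - T)))
      MeasureTheory.volume 0 T := by
    apply ContinuousOn.intervalIntegrable
    rw [huIcc]
    apply ContinuousOn.add
    · exact (Continuous.continuousOn (by continuity)).mul hcδθ
    · exact (Continuous.continuousOn (by continuity)).mul
        ((continuousOn_const).add (hw.comp (by continuity)).continuousOn)
  have key : (∫ σ in (0:ℝ)..T,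
      ((T - 2 * σ) * δθ (σ + t - T) + σ * (T - σ) * (F + w (σ + t - T)))) = 0 := by
    have h := intervalIntegral.integral_eq_sub_of_hasDerivAt
      (f := fun σ : ℝ => σ * (T - σ) * δθ (σ + t - T))
      (f' := fun σ : ℝ => (T - 2 * σ) * δθ (σ + t - T) + σ * (T - σ) * (F + w (σ + t - T)))
      (fun σ hσ => by
        rw [huIcc] at hσ
        have h1 : HasDerivAt (fun σ : ℝ => σ * (T - σ)) (T - 2 * σ) σ := by
          have := (hasDerivAt_id σ).mul ((hasDerivAt_const σ T).sub (hasDerivAt_id σ))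
          refine this.congr_deriv ?_
          all_goals simp only [Pi.sub_apply, id_eq]; ring
        have h2 : HasDerivAt (fun σ : ℝ => σ + t - T) 1 σ := by
          simpa using ((hasDerivAt_id σ).add_const t).sub_const T
        have h3 : HasDerivAt (fun σ : ℝ => δθ (σ + t - T)) (F + w (σ + t - T)) σ := by
          have := (hδθ _ (hmem σ hσ)).comp σ h2; rw [mul_one] at this; exact this
        have := h1.mul h3
        exact this) hint_key
    rw [h]
    ring_nf
  have hpoly : (∫ σ in (0:ℝ)..T, F * (σ * (T - σ))) = F * T ^ 3 / 6 := by
    have h := intervalIntegral.integral_eq_sub_of_hasDerivAt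
      (a := (0:ℝ)) (b := T)
      (f := fun σ : ℝ => F * (T * σ ^ 2 / 2 - σ ^ 3 / 3))
      (f' := fun σ : ℝ => F * (σ * (T - σ)))
      (fun σ _ => by
        have h0 := ((((hasDerivAt_pow 2 σ).const_mul T).div_const 2).sub
            ((hasDerivAt_pow 3 σ).div_const 3)).const_mul F
        refine h0.congr_deriv ?_
        push_cast
        ring)
      ((continuous_const.mul (continuous_id.mul (continuous_const.sub continuous_id))).intervalIntegrable _ _)
    rw [h]; ring
  have hintpoly : IntervalIntegrable (fun σ : ℝ => F * (σ * (T - σ)))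
      MeasureTheory.volume 0 T :=
    (continuous_const.mul (continuous_id.mul (continuous_const.sub continuous_id))).intervalIntegrable _ _
  have hsplit : (∫ σ in (0:ℝ)..T,
      ((T - 2 * σ) * δθ (σ + t - T) + σ * (T - σ) * w (σ + t - T)))
      = (∫ σ in (0:ℝ)..T,
        ((T - 2 * σ) * δθ (σ + t - T) + σ * (T - σ) * (F + w (σ + t - T))))
        - ∫ σ in (0:ℝ)..T, F * (σ * (T - σ)) := by
    rw [← intervalIntegral.integral_sub hint_key hintpoly]
    apply intervalIntegral.integral_congr
    intro σ _
    ring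
  rw [hsplit, key, hpoly]
  have hT3 : T ^ 3 ≠ 0 := by positivity
  field_simp
  ring
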